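/- Let Ω ⊆ ℂ be open and let τ, ρ : Ω → ℝ be smooth with ρ > 0. Set ρ* := 1/ρ, τ* := τ − log ρ, and define μ := (2/ρ)(ρ_{zz} − 2 τ_z ρ_z) and μ* := (2/ρ*)((ρ*)_{zz} − 2 (τ*)_z (ρ*)_z). Then μ* = −μ identically on Ω. (In the duality between a Ribaucour surface and its dual, the Laguerre–Hopf functions are opposite; in particular the coordinate curves are curvature lines for one surface if and only if they are for the other, and 1/k₂ − 1/k₁ = −(1/k₂* − 1/k₁*).) -/

import Mathlib

/-- Wirtinger derivative `u_z = (u_x - i u_y)/2` of a complex-valued function on `ℂ`. -/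
noncomputable def wdz (u : ℂ → ℂ) (z : ℂ) : ℂ :=
  (fderiv ℝ u z 1 - Complex.I * fderiv ℝ u z Complex.I) / 2

/-- The complexification of a real-valued function on `ℂ`. -/
noncomputable def cof (u : ℂ → ℝ) : ℂ → ℂ := fun z => (u z : ℂ)

open Complex

lemma wdz_congr {u v : ℂ → ℂ} {z : ℂ} (h : u =ᶠ[nhds z] v) : wdz u z = wdz v z := by
  unfold wdz; rw [h.fderiv_eq]

lemma wdz_mul {u v : ℂ → ℂ} {z : ℂ} (hu : DifferentiableAt ℝ u z)
    (hv : DifferentiableAt ℝ v z) :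
    wdz (fun w => u w * v w) z = wdz u z * v z + u z * wdz v z := by
  unfold wdz
  rw [fderiv_fun_mul hu hv]
  simp [smul_eq_mul]
  ring

lemma wdz_neg {u : ℂ → ℂ} {z : ℂ} : wdz (fun w => -u w) z = -wdz u z := by
  unfold wdz
  rw [fderiv_fun_neg]
  simp
  ring

lemma wdz_sub {u v : ℂ → ℂ} {z : ℂ} (hu : DifferentiableAt ℝ u z)
    (hv : DifferentiableAt ℝ v z) :
    wdz (fun w => u w - v w) z = wdz u z - wdz v z := by
  unfold wdz
  rw [fderiv_fun_sub hu hv]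
  simp
  ring

lemma wdz_inv {u : ℂ → ℂ} {z : ℂ} (hu : DifferentiableAt ℝ u z) (h0 : u z ≠ 0) :
    wdz (fun w => (u w)⁻¹) z = -(wdz u z) / (u z) ^ 2 := by
  unfold wdz
  have hc : fderiv ℝ (fun w => (u w)⁻¹) z = (fderiv ℝ Inv.inv (u z)).comp (fderiv ℝ u z) :=
    fderiv_comp z (differentiableAt_inv h0) hu
  rw [hc, fderiv_inv' h0]
  simp [ContinuousLinearMap.comp_apply]
  field_simp
  ring

lemma cof_differentiableAt {u : ℂ → ℝ} {z : ℂ} (hu : DifferentiableAt ℝ u z) :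
    DifferentiableAt ℝ (cof u) z :=
  Complex.ofRealCLM.differentiableAt.comp z hu

lemma fderiv_cof_apply {u : ℂ → ℝ} {z : ℂ} (hu : DifferentiableAt ℝ u z) (w : ℂ) :
    fderiv ℝ (cof u) z w = (fderiv ℝ u z w : ℂ) := by
  have h : HasFDerivAt (cof u) (Complex.ofRealCLM.comp (fderiv ℝ u z)) z :=
    Complex.ofRealCLM.hasFDerivAt.comp z hu.hasFDerivAt
  rw [h.fderiv]
  rfl

lemma wdz_cof_log {u : ℂ → ℝ} {z : ℂ} (hu : DifferentiableAt ℝ u z) (h0 : u z ≠ 0) :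
    wdz (cof fun w => Real.log (u w)) z = (u z : ℂ)⁻¹ * wdz (cof u) z := by
  have hlog : HasFDerivAt (fun w => Real.log (u w)) ((u z)⁻¹ • fderiv ℝ u z) z :=
    (Real.hasDerivAt_log h0).comp_hasFDerivAt z hu.hasFDerivAt
  have h2 : HasFDerivAt (cof fun w => Real.log (u w))
      (Complex.ofRealCLM.comp ((u z)⁻¹ • fderiv ℝ u z)) z :=
    Complex.ofRealCLM.hasFDerivAt.comp z hlog
  unfold wdz
  rw [h2.fderiv, fderiv_cof_apply hu, fderiv_cof_apply hu]
  simp [ContinuousLinearMap.comp_apply]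
  ring

lemma contDiffOn_wdz {f : ℂ → ℂ} {Ω : Set ℂ} (hf : ContDiffOn ℝ (⊤ : ℕ∞) f Ω)
    (hΩ : IsOpen Ω) : ContDiffOn ℝ (⊤ : ℕ∞) (wdz f) Ω := by
  have hd : ContDiffOn ℝ (⊤ : ℕ∞) (fderiv ℝ f) Ω := hf.fderiv_of_isOpen hΩ le_rfl
  have h1 : ContDiffOn ℝ (⊤ : ℕ∞) (fun w => fderiv ℝ f w 1) Ω := hd.clm_apply contDiffOn_const
  have h2 : ContDiffOn ℝ (⊤ : ℕ∞) (fun w => fderiv ℝ f w Complex.I) Ω :=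
    hd.clm_apply contDiffOn_const
  exact (h1.sub (contDiffOn_const.mul h2)).div_const 2

/-- for smooth `τ`, `ρ` with `ρ > 0` on the open set `Ω`, with dual data
`ρ* = 1/ρ`, `τ* = τ - log ρ`, the Laguerre-Hopf functions
`μ = (2/ρ)(ρ_{zz} - 2τ_zρ_z)` and `μ* = (2/ρ*)((ρ*)_{zz} - 2(τ*)_z(ρ*)_z)` satisfy
`μ* = -μ` on `Ω`. -/
theorem dual_laguerre_hopf_function_is_opposite
    (Ω : Set ℂ) (hΩ : IsOpen Ω) (τ ρ : ℂ → ℝ)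
    (hτ : ContDiffOn ℝ (⊤ : ℕ∞) τ Ω) (hρ : ContDiffOn ℝ (⊤ : ℕ∞) ρ Ω)
    (hρpos : ∀ z ∈ Ω, 0 < ρ z)
    (ρs τs : ℂ → ℝ)
    (hρs : ∀ z ∈ Ω, ρs z = 1 / ρ z)
    (hτs : ∀ z ∈ Ω, τs z = τ z - Real.log (ρ z))
    (μ μs : ℂ → ℂ)
    (hμ : ∀ z ∈ Ω, μ z =
      2 / (ρ z : ℂ) * (wdz (wdz (cof ρ)) z - 2 * wdz (cof τ) z * wdz (cof ρ) z))
    (hμs : ∀ z ∈ Ω, μs z =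
      2 / (ρs z : ℂ) * (wdz (wdz (cof ρs)) z - 2 * wdz (cof τs) z * wdz (cof ρs) z)) :
    ∀ z ∈ Ω, μs z = -μ z := by
  -- complexified smoothness
  have hcρ : ContDiffOn ℝ (⊤ : ℕ∞) (cof ρ) Ω := Complex.ofRealCLM.contDiff.comp_contDiffOn hρ
  have hcτ : ContDiffOn ℝ (⊤ : ℕ∞) (cof τ) Ω := Complex.ofRealCLM.contDiff.comp_contDiffOn hτ
  have hA : ContDiffOn ℝ (⊤ : ℕ∞) (wdz (cof ρ)) Ω := contDiffOn_wdz hcρ hΩ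
  -- pointwise differentiability for w ∈ Ω
  have hdρ : ∀ w ∈ Ω, DifferentiableAt ℝ ρ w := fun w hw =>
    (hρ.contDiffAt (hΩ.mem_nhds hw)).differentiableAt (by simp)
  have hdcρ : ∀ w ∈ Ω, DifferentiableAt ℝ (cof ρ) w := fun w hw =>
    (hcρ.contDiffAt (hΩ.mem_nhds hw)).differentiableAt (by simp)
  have hdcτ : ∀ w ∈ Ω, DifferentiableAt ℝ (cof τ) w := fun w hw =>
    (hcτ.contDiffAt (hΩ.mem_nhds hw)).differentiableAt (by simp)
  have hdA : ∀ w ∈ Ω, DifferentiableAt ℝ (wdz (cof ρ)) w := fun w hw =>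
    (hA.contDiffAt (hΩ.mem_nhds hw)).differentiableAt (by simp)
  have hne : ∀ w ∈ Ω, (cof ρ) w ≠ 0 := fun w hw => by
    simpa [cof] using (hρpos w hw).ne'
  -- ρ* = (cof ρ)⁻¹ on Ω
  have hcρs : ∀ w ∈ Ω, cof ρs w = ((cof ρ) w)⁻¹ := fun w hw => by
    simp [cof, hρs w hw]
  -- the first Wirtinger derivative of ρ*
  set g : ℂ → ℂ := fun w => -(wdz (cof ρ) w * (((cof ρ) w) ^ 2)⁻¹) with hg
  have hwρs : ∀ w ∈ Ω, wdz (cof ρs) w = g w := by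
    intro w hw
    have he : cof ρs =ᶠ[nhds w] fun y => ((cof ρ) y)⁻¹ :=
      Filter.eventuallyEq_of_mem (hΩ.mem_nhds hw) (fun y hy => hcρs y hy)
    rw [wdz_congr he, wdz_inv (hdcρ w hw) (hne w hw), hg]
    field_simp
  intro z hz
  have hpz : (cof ρ) z ≠ 0 := hne z hz
  -- second Wirtinger derivative of ρ*
  have hsq : (fun w => ((cof ρ) w) ^ 2) = fun w => (cof ρ) w * (cof ρ) w := by
    funext w; ring
  have hdsq : DifferentiableAt ℝ (fun w => ((cof ρ) w) ^ 2) z := by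
    rw [hsq]; exact (hdcρ z hz).mul (hdcρ z hz)
  have hdsqinv : DifferentiableAt ℝ (fun w => (((cof ρ) w) ^ 2)⁻¹) z :=
    hdsq.inv (pow_ne_zero 2 hpz)
  have hwsq : wdz (fun w => ((cof ρ) w) ^ 2) z =
      wdz (cof ρ) z * (cof ρ) z + (cof ρ) z * wdz (cof ρ) z := by
    rw [hsq]; exact wdz_mul (hdcρ z hz) (hdcρ z hz)
  have hwsqinv : wdz (fun w => (((cof ρ) w) ^ 2)⁻¹) z =
      -(wdz (cof ρ) z * (cof ρ) z + (cof ρ) z * wdz (cof ρ) z) / (((cof ρ) z) ^ 2) ^ 2 := by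
    rw [wdz_inv hdsq (pow_ne_zero 2 hpz), hwsq]
  have hwwρs : wdz (wdz (cof ρs)) z = wdz g z := by
    exact wdz_congr (Filter.eventuallyEq_of_mem (hΩ.mem_nhds hz) (fun y hy => hwρs y hy))
  have hwg : wdz g z = -(wdz (wdz (cof ρ)) z * (((cof ρ) z) ^ 2)⁻¹ +
      wdz (cof ρ) z * (-(wdz (cof ρ) z * (cof ρ) z + (cof ρ) z * wdz (cof ρ) z) /
        (((cof ρ) z) ^ 2) ^ 2)) := by
    rw [hg]
    rw [wdz_neg (u := fun w => wdz (cof ρ) w * (((cof ρ) w) ^ 2)⁻¹),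
      wdz_mul (hdA z hz) hdsqinv, hwsqinv]
  -- first Wirtinger derivative of τ*
  have hwτs : wdz (cof τs) z =
      wdz (cof τ) z - ((ρ z : ℂ))⁻¹ * wdz (cof ρ) z := by
    have he : cof τs =ᶠ[nhds z]
        fun w => cof τ w - cof (fun y => Real.log (ρ y)) w :=
      Filter.eventuallyEq_of_mem (hΩ.mem_nhds hz) (fun y hy => by
        simp [cof, hτs y hy])
    have hdlog : DifferentiableAt ℝ (fun y => Real.log (ρ y)) z :=
      (hdρ z hz).log (hρpos z hz).ne'
    rw [wdz_congr he, wdz_sub (hdcτ z hz) (cof_differentiableAt hdlog),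
      wdz_cof_log (hdρ z hz) (hρpos z hz).ne']
  -- put everything together
  have hρsz : ((ρs z : ℝ) : ℂ) = ((ρ z : ℂ))⁻¹ := by
    rw [hρs z hz]; push_cast; rw [one_div]
  have hcρz : (cof ρ) z = ((ρ z : ℝ) : ℂ) := rfl
  rw [hμs z hz, hμ z hz, hwwρs, hwg, hwτs, hwρs z hz, hg, hρsz]
  simp only [hcρz] at hpz ⊢
  field_simp
  ring
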